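/- Let A be a modal formula with purely modal uniform pre-interpolant A* (defined as the conjunction of all substitutions of the propositional atoms of A by ⊤/⊥, in a propositional skeleton of A). Then for any purely modal formula B, if ⊢ B → A in classical propositional logic over the modal language, then ⊢ B → A*. -/
import Mathlib


/-- Formulas of the modal language with atoms, ⊥, → and □. -/
inductive Fml : Type
  | atom : ℕ → Fml
  | bot  : Fml
  | imp  : Fml → Fml → Fml
  | box  : Fml → Fml
deriving DecidableEq

/-- Classical Boolean evaluation where boxed formulas behave like atoms:
the valuation `v` is queried on atoms and on boxed formulas. -/
def evalCL (v : Fml → Bool) : Fml → Bool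
  | .atom n => v (.atom n)
  | .bot => false
  | .imp A B => !(evalCL v A) || evalCL v B
  | .box A => v (.box A)

/-- Classical tautology over the modal language (□-formulas act as atoms). -/
def Taut (A : Fml) : Prop := ∀ v, evalCL v A = true

/-- A formula is purely modal if every atom is in the scope of some □. -/
def PurelyModal : Fml → Prop
  | .atom _ => False
  | .bot => True
  | .imp A B => PurelyModal A ∧ PurelyModal B
  | .box _ => True

/-- A formula with no occurrence of □. -/
def BoxFree : Fml → Prop
  | .atom _ => True
  | .bot => True
  | .imp A B => BoxFree A ∧ BoxFree B
  | .box _ => False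

/-- Substitution of formulas for atoms. -/
def subst (s : ℕ → Fml) : Fml → Fml
  | .atom n => s n
  | .bot => .bot
  | .imp A B => .imp (subst s A) (subst s B)
  | .box A => .box (subst s A)

/-- Classical propositional derivability over the modal language. -/
inductive CLderiv : Fml → Prop
  | taut {A} : Taut A → CLderiv A
  | mp {A B} : CLderiv (.imp A B) → CLderiv A → CLderiv B

/-- ⊤, defined as ⊥ → ⊥. -/
def ftop : Fml := .imp .bot .bot

/-- Conjunction, defined from → and ⊥. -/
def fand (A B : Fml) : Fml := .imp (.imp A (.imp B .bot)) .bot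

/-- Conjunction of a list of formulas. -/
def bigConj : List Fml → Fml
  | [] => ftop
  | A :: l => fand A (bigConj l)

/-- The skeleton substitution: atoms `< m` (the `p`-atoms) are left alone,
atoms `≥ m` (the `q`-atoms) are replaced by `□ (B n)`.  So
`A = subst (skSub m B) C` for a propositional skeleton `C` of `A`. -/
def skSub (m : ℕ) (B : ℕ → Fml) (n : ℕ) : Fml :=
  if n < m then .atom n else .box (B n)

/-- The substitution where the `p`-atoms are replaced by ⊤/⊥ according to
`v` and the `q`-atoms by `□ (B n)`. -/
def skSubB (m : ℕ) (B : ℕ → Fml) (v : ℕ → Bool) (n : ℕ) : Fml :=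
  if n < m then (if v n then ftop else .bot) else .box (B n)

/-- The purely modal uniform pre-interpolant
`A* = ⋀_{b⃗ ∈ {⊤,⊥}^m} C(b⃗, □B₀,…)` of `A = C(p⃗, □B₀,…)`. -/
noncomputable def preInterp (m : ℕ) (B : ℕ → Fml) (C : Fml) : Fml :=
  bigConj (((Finset.univ : Finset (Fin m → Bool)).toList).map
    (fun v => subst (skSubB m B (fun n => if h : n < m then v ⟨n, h⟩ else false)) C))

lemma taut_of_CLderiv {A : Fml} (h : CLderiv A) : Taut A := by
  induction h with
  | taut h => exact h
  | mp h1 h2 ih1 ih2 =>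
    intro v
    have := ih1 v
    simp [evalCL, ih2 v] at this
    exact this

lemma eval_purelyModal {v v' : Fml → Bool} (hbox : ∀ A, v (.box A) = v' (.box A)) :
    ∀ D, PurelyModal D → evalCL v D = evalCL v' D := by
  intro D hD
  induction D with
  | atom n => exact hD.elim
  | bot => rfl
  | imp A B ihA ihB => simp [evalCL, ihA hD.1, ihB hD.2]
  | box A _ => simpa [evalCL] using hbox A

lemma eval_subst_boxFree {v v' : Fml → Bool} {σ σ' : ℕ → Fml}
    (h : ∀ n, evalCL v (σ n) = evalCL v' (σ' n)) :
    ∀ C, BoxFree C → evalCL v (subst σ C) = evalCL v' (subst σ' C) := by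
  intro C hC
  induction C with
  | atom n => exact h n
  | bot => rfl
  | imp A B ihA ihB => simp [subst, evalCL, ihA hC.1, ihB hC.2]
  | box A _ => exact hC.elim

lemma eval_bigConj {v : Fml → Bool} :
    ∀ l : List Fml, evalCL v (bigConj l) = l.all (fun A => evalCL v A) := by
  intro l
  induction l with
  | nil => simp [bigConj, ftop, evalCL]
  | cons A l ih =>
    simp [bigConj, fand, evalCL, ih]

/-- For any purely modal formula `D`, if `⊢ D → A` (where `A = C(p⃗,□B⃗)` with
□-free propositional skeleton `C`), then `⊢ D → A*` for the purely modal
uniform pre-interpolant `A*` of `A`. -/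
theorem preInterp_uniform (m : ℕ) (B : ℕ → Fml) (C : Fml) (hC : BoxFree C)
    (D : Fml) (hD : PurelyModal D)
    (h : CLderiv (.imp D (subst (skSub m B) C))) :
    CLderiv (.imp D (preInterp m B C)) := by
  have htaut := taut_of_CLderiv h
  apply CLderiv.taut
  intro v
  simp only [evalCL]
  rcases hvD : evalCL v D with _ | _
  · simp
  · simp only [Bool.not_true, Bool.false_or]
    unfold preInterp
    rw [eval_bigConj]
    rw [List.all_eq_true]
    intro X hX
    rw [List.mem_map] at hX
    obtain ⟨w, -, rfl⟩ := hX
    set wf : ℕ → Bool := fun n => if h : n < m then w ⟨n, h⟩ else false with hwf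
    -- modify v on small atoms
    set v' : Fml → Bool := fun f =>
      match f with
      | .atom n => if n < m then wf n else v (.atom n)
      | g => v g with hv'
    have hbox : ∀ A, v (.box A) = v' (.box A) := fun A => rfl
    have hD' : evalCL v' D = true := by
      rw [← eval_purelyModal hbox D hD, hvD]
    have hC' := htaut v'
    simp only [evalCL, hD', Bool.not_true, Bool.false_or] at hC'
    have key : evalCL v (subst (skSubB m B wf) C) = evalCL v' (subst (skSub m B) C) := by
      apply eval_subst_boxFree _ C hC
      intro n
      by_cases hn : n < m
      · have : wf n = w ⟨n, hn⟩ := by simp [hwf, hn]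
        rcases hw : wf n with _ | _ <;>
          simp [skSubB, skSub, hn, evalCL, ftop, hv', hw]
      · simp [skSubB, skSub, hn, evalCL, hv']
    rw [key]
    exact hC'
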